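/- Renormalization-group step for the one-dimensional Ising model: for all real K₀, K₁ there exist unique real numbers c > 0, K₀', K₁' such that the square of the transfer matrix T(K₀, K₁) = [[e^{K₁+K₀}, e^{−K₁}], [e^{−K₁}, e^{K₁−K₀}]] equals c · T(K₀', K₁'), i.e. T(K₀, K₁)² = c · [[e^{K₁'+K₀'}, e^{−K₁'}], [e^{−K₁'}, e^{K₁'−K₀'}]]. -/
import Mathlib


/-- The transfer matrix of the one-dimensional Ising model with nearest-neighbour
coupling `K₁` and field `K₀`. -/
noncomputable def transferMatrix (K₀ K₁ : ℝ) : Matrix (Fin 2) (Fin 2) ℝ :=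
  !![Real.exp (K₁ + K₀), Real.exp (-K₁);
     Real.exp (-K₁),     Real.exp (K₁ - K₀)]

/-- renormalization-group step for the 1D Ising model: for all real
`K₀, K₁` there exist unique `c > 0` and renormalized couplings `K₀', K₁'` such that
`T(K₀, K₁)² = c • T(K₀', K₁')`. The triple is packaged as `p = (c, K₀', K₁')`. -/
theorem rg_step_unique (K₀ K₁ : ℝ) :
    ∃! p : ℝ × ℝ × ℝ, 0 < p.1 ∧
      (transferMatrix K₀ K₁) ^ 2 = p.1 • transferMatrix p.2.1 p.2.2 := by
  set a : ℝ := Real.exp (K₁ + K₀) * Real.exp (K₁ + K₀) + Real.exp (-K₁) * Real.exp (-K₁) with ha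
  set b : ℝ := Real.exp (K₁ + K₀) * Real.exp (-K₁) + Real.exp (-K₁) * Real.exp (K₁ - K₀) with hb
  set d : ℝ := Real.exp (-K₁) * Real.exp (-K₁) + Real.exp (K₁ - K₀) * Real.exp (K₁ - K₀) with hd
  have hapos : 0 < a := by positivity
  have hbpos : 0 < b := by positivity
  have hdpos : 0 < d := by positivity
  set la := Real.log a
  set lb := Real.log b
  set ld := Real.log d
  refine ⟨(Real.exp ((la + ld + 2 * lb) / 4), (la - ld) / 2, (la + ld - 2 * lb) / 4),
    ⟨Real.exp_pos _, ?_⟩, ?_⟩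
  · have ea : Real.exp ((la + ld + 2 * lb) / 4) *
        Real.exp ((la + ld - 2 * lb) / 4 + (la - ld) / 2) = a := by
      rw [← Real.exp_add,
        show (la + ld + 2 * lb) / 4 + ((la + ld - 2 * lb) / 4 + (la - ld) / 2) = la by ring,
        Real.exp_log hapos]
    have eb : Real.exp ((la + ld + 2 * lb) / 4) *
        Real.exp (-((la + ld - 2 * lb) / 4)) = b := by
      rw [← Real.exp_add,
        show (la + ld + 2 * lb) / 4 + -((la + ld - 2 * lb) / 4) = lb by ring,
        Real.exp_log hbpos]
    have ed : Real.exp ((la + ld + 2 * lb) / 4) *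
        Real.exp ((la + ld - 2 * lb) / 4 - (la - ld) / 2) = d := by
      rw [← Real.exp_add,
        show (la + ld + 2 * lb) / 4 + ((la + ld - 2 * lb) / 4 - (la - ld) / 2) = ld by ring,
        Real.exp_log hdpos]
    ext i j
    fin_cases i <;> fin_cases j <;>
      simp [transferMatrix, pow_two, Matrix.mul_apply, Fin.sum_univ_two, ea, eb, ed, ha, hb, hd] <;>
      ring_nf
  · rintro ⟨c, x, y⟩ ⟨hc, heq⟩
    replace hc : 0 < c := hc
    have h00 : c * Real.exp (y + x) = a := by
      have := congrFun (congrFun heq 0) 0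
      simpa [transferMatrix, pow_two, Matrix.mul_apply, Fin.sum_univ_two] using this.symm
    have h01 : c * Real.exp (-y) = b := by
      have := congrFun (congrFun heq 0) 1
      simpa [transferMatrix, pow_two, Matrix.mul_apply, Fin.sum_univ_two] using this.symm
    have h11 : c * Real.exp (y - x) = d := by
      have := congrFun (congrFun heq 1) 1
      simpa [transferMatrix, pow_two, Matrix.mul_apply, Fin.sum_univ_two] using this.symm
    have e00 : Real.log c + (y + x) = la := by
      rw [← Real.exp_log hc, ← Real.exp_add] at h00
      simpa [Real.log_exp] using congrArg Real.log h00
    have e01 : Real.log c + -y = lb := by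
      rw [← Real.exp_log hc, ← Real.exp_add] at h01
      simpa [Real.log_exp] using congrArg Real.log h01
    have e11 : Real.log c + (y - x) = ld := by
      rw [← Real.exp_log hc, ← Real.exp_add] at h11
      simpa [Real.log_exp] using congrArg Real.log h11
    have hlc : Real.log c = (la + ld + 2 * lb) / 4 := by linarith
    have hx : x = (la - ld) / 2 := by linarith
    have hy : y = (la + ld - 2 * lb) / 4 := by linarith
    have hcval : c = Real.exp ((la + ld + 2 * lb) / 4) := by
      rw [← hlc, Real.exp_log hc]
    simp [hcval, hx, hy, Prod.ext_iff]
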